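/- Let ω be a radial weight, 0 < p < ∞ and μ ∈ D. If there exists a constant C > 0 such that ∫_𝔻 |z|^{np} μ̂(z)^p ω(z) dA(z) ≤ C μ_{2n+1}^p ∫_𝔻 |z|^{np} ω(z) dA(z) for all n ∈ ℕ ∪ {0} (i.e., the Littlewood–Paley inequality for D^μ holds for all monomials f(z) = z^n), then ω ∈ D̂. -/

import Mathlib

open MeasureTheory Set Filter
open scoped ENNReal

/-- The tail integral `ω̂(r) = ∫_r^1 ω(s) ds` of a radial weight. -/
noncomputable def wHat (ω : ℝ → ℝ) (r : ℝ) : ℝ := ∫ s in r..1, ω s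

/-- The moment `ω_x = ∫_0^1 s^x ω(s) ds` of a radial weight. -/
noncomputable def wMom (ω : ℝ → ℝ) (x : ℝ) : ℝ := ∫ s in (0:ℝ)..1, s ^ x * ω s

/-- A radial weight: nonnegative, integrable on `[0,1)`, with positive tail integrals. -/
def IsRadialWeight (ω : ℝ → ℝ) : Prop :=
  (∀ s ∈ Set.Ico (0:ℝ) 1, 0 ≤ ω s) ∧
    MeasureTheory.IntegrableOn ω (Set.Ico (0:ℝ) 1) ∧
    ∀ r ∈ Set.Ico (0:ℝ) 1, 0 < wHat ω r

/-- The class `D̂` of radial weights. -/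
def Dhat (ω : ℝ → ℝ) : Prop :=
  ∃ C > (1:ℝ), ∀ r ∈ Set.Ico (0:ℝ) 1, wHat ω r ≤ C * wHat ω ((1 + r) / 2)

/-- The class `Ď` of radial weights. -/
def Dcheck (ω : ℝ → ℝ) : Prop :=
  ∃ k > (1:ℝ), ∃ C > (1:ℝ), ∀ r ∈ Set.Ico (0:ℝ) 1,
    wHat ω r ≥ C * wHat ω (1 - (1 - r) / k)

/-- The class `D = D̂ ∩ Ď`. -/
def Dclass (ω : ℝ → ℝ) : Prop := Dhat ω ∧ Dcheck ω

/-- The class `M`: `ω_x ≥ C ω_{kx}` for all `x ≥ 1`. -/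
def Mclass (ω : ℝ → ℝ) : Prop :=
  ∃ C > (1:ℝ), ∃ k > (1:ℝ), ∀ x : ℝ, 1 ≤ x → wMom ω x ≥ C * wMom ω (k * x)

/-- The fractional derivative `D^μ f(z) = Σ (f̂(n)/μ_{2n+1}) zⁿ` induced by a radial
weight `μ`, acting on the Taylor coefficients `a` of `f`. -/
noncomputable def Dfrac (μ : ℝ → ℝ) (a : ℕ → ℂ) (z : ℂ) : ℂ :=
  ∑' n : ℕ, (a n / ((wMom μ (2 * (n : ℝ) + 1) : ℝ) : ℂ)) * z ^ n

/-- `∫_𝔻 |f(z)|^p w(|z|) dA(z)` as a Lebesgue integral (up to the normalization `1/π`). -/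
noncomputable def discLInt (p : ℝ) (w : ℝ → ℝ) (f : ℂ → ℂ) : ℝ≥0∞ :=
  ∫⁻ z in Metric.ball (0:ℂ) 1, ENNReal.ofReal (‖f z‖ ^ p * w ‖z‖)


open Real Set MeasureTheory intervalIntegral
open scoped Real Topology ENNReal

section Weight

variable {ν : ℝ → ℝ} (hInt : IntegrableOn ν (Ico 0 1))
  (hnn : ∀ s ∈ Ico (0:ℝ) 1, 0 ≤ ν s)

lemma ae_ne_one : ∀ᵐ s : ℝ ∂volume, s ≠ 1 := by
  refine ae_iff.mpr ?_
  simpa using Real.volume_singleton (a := (1:ℝ))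

include hInt in
lemma w_icc : IntegrableOn ν (Icc 0 1) := by
  have h1 : IntegrableOn ν {(1:ℝ)} := by
    unfold IntegrableOn
    rw [Measure.restrict_eq_zero.2 Real.volume_singleton]
    exact integrable_zero_measure
  exact (hInt.union h1).mono_set (by
    intro s hs
    rcases lt_or_eq_of_le hs.2 with h | h
    · exact Or.inl ⟨hs.1, h⟩
    · exact Or.inr (by simp [h]))

include hInt in
lemma w_ii {a b : ℝ} (h0 : 0 ≤ a) (hab : a ≤ b) (hb : b ≤ 1) :
    IntervalIntegrable ν volume a b := by
  refine ((w_icc hInt).mono_set ?_).intervalIntegrable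
  rw [uIcc_of_le hab]
  exact Icc_subset_Icc h0 hb

include hnn in
lemma w_ae_nn {a b : ℝ} (h0 : 0 ≤ a) (hb : b ≤ 1) :
    ∀ᵐ s ∂(volume.restrict (Icc a b)), 0 ≤ ν s := by
  refine ae_restrict_iff' measurableSet_Icc |>.mpr ?_
  filter_upwards [ae_ne_one] with s hs1 hs
  exact hnn s ⟨le_trans h0 hs.1, lt_of_le_of_ne (le_trans hs.2 hb) hs1⟩

include hInt hnn in
lemma hat_add {a b : ℝ} (h0 : 0 ≤ a) (hab : a ≤ b) (hb : b ≤ 1) :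
    wHat ν a = (∫ s in a..b, ν s) + wHat ν b :=
  (integral_add_adjacent_intervals (w_ii hInt h0 hab hb)
    (w_ii hInt (le_trans h0 hab) hb le_rfl)).symm

include hInt hnn in
lemma hat_anti {a b : ℝ} (h0 : 0 ≤ a) (hab : a ≤ b) (hb : b ≤ 1) :
    wHat ν b ≤ wHat ν a := by
  rw [hat_add hInt hnn h0 hab hb]
  have : 0 ≤ ∫ s in a..b, ν s :=
    integral_nonneg_of_ae_restrict hab (w_ae_nn hnn h0 hb)
  linarith

include hInt hnn in
lemma hat_nonneg {a : ℝ} (h0 : 0 ≤ a) (ha : a ≤ 1) : 0 ≤ wHat ν a :=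
  integral_nonneg_of_ae_restrict ha (w_ae_nn hnn h0 le_rfl)

include hInt in
lemma w_pow_ii {x a b : ℝ} (hx : 0 ≤ x) (h0 : 0 ≤ a) (hab : a ≤ b) (hb : b ≤ 1) :
    IntervalIntegrable (fun s => s ^ x * ν s) volume a b := by
  have hcont : Continuous fun s : ℝ => (max 0 (min s 1)) ^ x :=
    (Real.continuous_rpow_const hx).comp (continuous_const.max (continuous_id.min continuous_const))
  have hig : IntegrableOn (fun s => (max 0 (min s 1)) ^ x * ν s) (Icc 0 1) := by
    refine Integrable.bdd_mul (w_icc hInt) hcont.aestronglyMeasurable (c := 1) (Filter.Eventually.of_forall fun s => ?_)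
    rw [Real.norm_eq_abs, abs_of_nonneg (Real.rpow_nonneg (le_max_left _ _) x)]
    exact Real.rpow_le_one (le_max_left _ _) (max_le zero_le_one (min_le_right _ _)) hx
  have hig2 : IntegrableOn (fun s => s ^ x * ν s) (Icc 0 1) := by
    refine hig.congr_fun (fun s hs => ?_) measurableSet_Icc
    dsimp only
    rw [min_eq_left hs.2, max_eq_right hs.1]
  refine (hig2.mono_set ?_).intervalIntegrable
  rw [uIcc_of_le hab]
  exact Icc_subset_Icc h0 hb

include hInt hnn in
lemma w_pow_ae_nn {x a b : ℝ} (hx : 0 ≤ x) (h0 : 0 ≤ a) (hb : b ≤ 1) :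
    ∀ᵐ s ∂(volume.restrict (Icc a b)), 0 ≤ s ^ x * ν s := by
  filter_upwards [w_ae_nn hnn h0 hb, ae_restrict_iff' measurableSet_Icc |>.mpr
    (Filter.Eventually.of_forall (fun s (hs : s ∈ Icc a b) => hs.1))] with s h1 h2
  exact mul_nonneg (Real.rpow_nonneg (le_trans h0 h2) x) h1

end Weight

section MomLemmas

variable {ν : ℝ → ℝ} (hInt : IntegrableOn ν (Ico 0 1))
  (hnn : ∀ s ∈ Ico (0:ℝ) 1, 0 ≤ ν s)

include hInt hnn in
lemma mom_nonneg {x : ℝ} (hx : 0 ≤ x) : 0 ≤ wMom ν x :=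
  integral_nonneg_of_ae_restrict zero_le_one (w_pow_ae_nn hInt hnn hx le_rfl le_rfl)

include hInt hnn in
lemma mom_le_hat {x c : ℝ} (hx : 0 ≤ x) (h0 : 0 ≤ c) (hc : c ≤ 1) :
    (∫ s in c..1, s ^ x * ν s) ≤ wHat ν c := by
  refine integral_mono_ae_restrict hc (w_pow_ii hInt hx h0 hc le_rfl) (w_ii hInt h0 hc le_rfl) ?_
  filter_upwards [w_ae_nn hnn h0 le_rfl, ae_restrict_iff' measurableSet_Icc |>.mpr
    (Filter.Eventually.of_forall (fun s (hs : s ∈ Icc c 1) => hs))] with s h1 h2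
  calc s ^ x * ν s ≤ 1 * ν s := by
        refine mul_le_mul_of_nonneg_right ?_ h1
        exact Real.rpow_le_one (le_trans h0 h2.1) h2.2 hx
    _ = ν s := one_mul _

include hInt hnn in
lemma mom_split {x c : ℝ} (hx : 0 ≤ x) (h0 : 0 ≤ c) (hc : c ≤ 1) :
    wMom ν x = (∫ s in (0:ℝ)..c, s ^ x * ν s) + ∫ s in c..1, s ^ x * ν s :=
  (integral_add_adjacent_intervals (w_pow_ii hInt hx le_rfl h0 hc)
    (w_pow_ii hInt hx h0 hc le_rfl)).symm

include hInt hnn in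
lemma mom_le_hat_zero {x : ℝ} (hx : 0 ≤ x) : wMom ν x ≤ wHat ν 0 :=
  mom_le_hat hInt hnn hx le_rfl zero_le_one

include hInt hnn in
lemma mom_tail_lower {x c : ℝ} (hx : 0 ≤ x) (h0 : 0 ≤ c) (hc : c ≤ 1) :
    c ^ x * wHat ν c ≤ wMom ν x := by
  rw [mom_split hInt hnn hx h0 hc]
  have h1 : 0 ≤ ∫ s in (0:ℝ)..c, s ^ x * ν s :=
    integral_nonneg_of_ae_restrict h0 (w_pow_ae_nn hInt hnn hx le_rfl hc)
  have h2 : c ^ x * wHat ν c ≤ ∫ s in c..1, s ^ x * ν s := by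
    have : c ^ x * wHat ν c = ∫ s in c..1, c ^ x * ν s := by
      rw [intervalIntegral.integral_const_mul]; rfl
    rw [this]
    refine integral_mono_ae_restrict hc
      ((w_ii hInt h0 hc le_rfl).const_mul _) (w_pow_ii hInt hx h0 hc le_rfl) ?_
    filter_upwards [w_ae_nn hnn h0 le_rfl, ae_restrict_iff' measurableSet_Icc |>.mpr
      (Filter.Eventually.of_forall (fun s (hs : s ∈ Icc c 1) => hs))] with s h1 h2
    exact mul_le_mul_of_nonneg_right (Real.rpow_le_rpow h0 h2.1 hx) h1
  linarith

end MomLemmas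

section Iter

-- iterated Dhat: halving the gap j times
lemma iterD {ν : ℝ → ℝ} {C₁ : ℝ} (hC₁ : 1 ≤ C₁)
    (hD : ∀ r ∈ Ico (0:ℝ) 1, wHat ν r ≤ C₁ * wHat ν ((1 + r) / 2)) :
    ∀ (j : ℕ) (t : ℝ), 0 < t → t ≤ 1 → wHat ν (1 - t) ≤ C₁ ^ j * wHat ν (1 - t / 2 ^ j) := by
  intro j
  induction j with
  | zero => intro t ht h1; simp
  | succ j ih =>
    intro t ht h1
    have hr : (1 - t / 2 ^ j) ∈ Ico (0:ℝ) 1 := by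
      constructor
      · have : t / 2 ^ j ≤ 1 := by
          apply div_le_one_of_le₀ (le_trans h1 (one_le_pow₀ one_le_two)) (by positivity)
        linarith
      · have : 0 < t / 2 ^ j := by positivity
        linarith
    have step := hD _ hr
    have harg : (1 + (1 - t / 2 ^ j)) / 2 = 1 - t / 2 ^ (j + 1) := by ring
    rw [harg] at step
    calc wHat ν (1 - t) ≤ C₁ ^ j * wHat ν (1 - t / 2 ^ j) := ih t ht h1
      _ ≤ C₁ ^ j * (C₁ * wHat ν (1 - t / 2 ^ (j+1))) := by
          refine mul_le_mul_of_nonneg_left step (by positivity)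
      _ = C₁ ^ (j+1) * wHat ν (1 - t / 2 ^ (j+1)) := by ring

-- iterated Dcheck: multiplying the gap by k, m times
lemma iterC {ν : ℝ → ℝ} {k C₂ : ℝ} (hk : 1 < k) (hC₂ : 1 < C₂)
    (hDc : ∀ r ∈ Ico (0:ℝ) 1, wHat ν r ≥ C₂ * wHat ν (1 - (1 - r) / k)) :
    ∀ (m : ℕ) (u : ℝ), 0 < u → k ^ m * u ≤ 1 → C₂ ^ m * wHat ν (1 - u) ≤ wHat ν (1 - k ^ m * u) := by
  intro m
  induction m with
  | zero => intro u hu h1; simp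
  | succ m ih =>
    intro u hu h1
    have hkpos : (0:ℝ) < k := lt_trans one_pos hk
    have hkm : (0:ℝ) < k ^ m := by positivity
    have hmono : k ^ m * u ≤ k ^ (m+1) * u := by
      have : k ^ m ≤ k ^ (m+1) := pow_le_pow_right₀ (le_of_lt hk) (Nat.le_succ m)
      exact mul_le_mul_of_nonneg_right this (le_of_lt hu)
    have h1' : k ^ m * u ≤ 1 := le_trans hmono h1
    have hr : (1 - k ^ (m+1) * u) ∈ Ico (0:ℝ) 1 := by
      constructor
      · linarith
      · have : 0 < k ^ (m+1) * u := by positivity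
        linarith
    have step := hDc _ hr
    have harg : 1 - (1 - (1 - k ^ (m+1) * u)) / k = 1 - k ^ m * u := by
      field_simp
      ring
    rw [harg] at step
    calc C₂ ^ (m+1) * wHat ν (1 - u) = C₂ * (C₂ ^ m * wHat ν (1 - u)) := by ring
      _ ≤ C₂ * wHat ν (1 - k ^ m * u) :=
          mul_le_mul_of_nonneg_left (ih u hu h1') (by positivity)
      _ ≤ wHat ν (1 - k ^ (m+1) * u) := step

end Iter

section ChooseL

lemma nat_sq_le_pow (l : ℕ) : ((l:ℝ) * l) ≤ 2 ^ (l+1) := by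
  have h : ∀ n : ℕ, n * n ≤ 2 ^ (n+1) := by
    intro n
    induction n with
    | zero => simp
    | succ n ih =>
      have h2 : n + 1 ≤ 2 ^ n := Nat.lt_two_pow_self
      have : (n+1) * (n+1) = n * n + (2 * n + 1) := by ring
      rw [this]
      calc n * n + (2 * n + 1) ≤ 2 ^ (n+1) + (2 * (n+1)) := by omega
        _ ≤ 2 ^ (n+1) + 2 ^ (n+1) := by
            have := Nat.mul_le_mul_left 2 h2
            omega
        _ = 2 ^ (n+2) := by ring
  have := h l
  calc ((l:ℝ) * l) = ((l * l : ℕ) : ℝ) := by push_cast; ring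
    _ ≤ ((2 ^ (l+1) : ℕ) : ℝ) := by exact_mod_cast this
    _ = 2 ^ (l+1) := by push_cast; ring

lemma choose_l {C₁ : ℝ} (hC₁ : 1 ≤ C₁) :
    ∃ l : ℕ, 1 ≤ l ∧ 2 * C₁ ^ l ≤ Real.exp ((2:ℝ) ^ l / 2) := by
  obtain ⟨l₀, hl₀⟩ := exists_nat_ge (4 * Real.log C₁ + 8)
  set l := max 8 l₀ with hldef
  have hlog : 0 ≤ Real.log C₁ := Real.log_nonneg hC₁
  have hl8 : (8:ℝ) ≤ l := by
    have : (8:ℕ) ≤ l := le_max_left _ _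
    exact_mod_cast this
  have hlge : 4 * Real.log C₁ + 8 ≤ l := by
    have : (l₀:ℝ) ≤ l := by exact_mod_cast le_max_right 8 l₀
    linarith
  refine ⟨l, le_trans (by norm_num) (le_max_left 8 l₀), ?_⟩
  have hkey : 1 + (l:ℝ) * Real.log C₁ ≤ (2:ℝ) ^ l / 2 := by
    have h1 : ((l:ℝ) * l) / 4 ≤ (2:ℝ) ^ l / 2 := by
      have ha := nat_sq_le_pow l
      have h2 : (2:ℝ) ^ (l+1) = 2 * 2 ^ l := by ring
      linarith
    have h2 : 1 + (l:ℝ) * Real.log C₁ ≤ ((l:ℝ) * l) / 4 := by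
      have hb : Real.log C₁ + 2 ≤ (l:ℝ)/4 := by linarith
      have hc : (0:ℝ) ≤ (l:ℝ) := by linarith
      nlinarith
    linarith
  have hC₁pos : (0:ℝ) < C₁ := lt_of_lt_of_le one_pos hC₁
  calc 2 * C₁ ^ l ≤ Real.exp 1 * Real.exp ((l:ℝ) * Real.log C₁) := by
        have h2 : (2:ℝ) ≤ Real.exp 1 := by
          have := Real.add_one_le_exp (1:ℝ)
          linarith
        have h3 : C₁ ^ l = Real.exp ((l:ℝ) * Real.log C₁) := by
          rw [mul_comm, Real.exp_mul, Real.exp_log hC₁pos, Real.rpow_natCast]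
        rw [h3]
        exact mul_le_mul_of_nonneg_right h2 (Real.exp_nonneg _)
    _ = Real.exp (1 + (l:ℝ) * Real.log C₁) := (Real.exp_add _ _).symm
    _ ≤ Real.exp ((2:ℝ) ^ l / 2) := Real.exp_le_exp.mpr hkey

end ChooseL

section LemmaA

lemma momA {μ : ℝ → ℝ} (hInt : IntegrableOn μ (Ico 0 1))
    (hnn : ∀ s ∈ Ico (0:ℝ) 1, 0 ≤ μ s)
    {C₁ : ℝ} (hC₁ : 1 < C₁)
    (hD : ∀ r ∈ Ico (0:ℝ) 1, wHat μ r ≤ C₁ * wHat μ ((1 + r) / 2)) :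
    ∃ C₄ : ℝ, 1 ≤ C₄ ∧ ∀ x : ℝ, 1 ≤ x → wMom μ x ≤ C₄ * wHat μ (1 - 1/x) := by
  obtain ⟨l, hl1, hlkey⟩ := choose_l hC₁.le
  set L : ℝ := 2 ^ l with hLdef
  have hL2 : (2:ℝ) ≤ L := by
    calc (2:ℝ) = 2 ^ 1 := (pow_one 2).symm
      _ ≤ 2 ^ l := pow_le_pow_right₀ one_le_two hl1
  have hLpos : (0:ℝ) < L := by positivity
  set CL : ℝ := C₁ ^ l with hCLdef
  have hCL1 : (1:ℝ) ≤ CL := one_le_pow₀ hC₁.le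
  set C₄ : ℝ := 2 * CL with hC₄def
  have hC₄1 : (1:ℝ) ≤ C₄ := by nlinarith
  -- small x case
  have base : ∀ x : ℝ, 1 ≤ x → x ≤ L → wMom μ x ≤ CL * wHat μ (1 - 1/x) := by
    intro x hx1 hxL
    have hx0 : (0:ℝ) ≤ x := by linarith
    have hxpos : (0:ℝ) < x := by linarith
    have h1 : wMom μ x ≤ wHat μ 0 := mom_le_hat_zero hInt hnn hx0
    have h2 : wHat μ 0 ≤ CL * wHat μ (1 - 1/L) := by
      have := iterD (le_of_lt hC₁) hD l 1 one_pos le_rfl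
      simpa using this
    have h3 : wHat μ (1 - 1/L) ≤ wHat μ (1 - 1/x) := by
      refine hat_anti hInt hnn ?_ ?_ ?_
      · have : 1/x ≤ 1 := by rw [div_le_one hxpos]; exact hx1
        linarith
      · have : 1/L ≤ 1/x := by
          apply one_div_le_one_div_of_le hxpos hxL
        linarith
      · have : 0 < 1/L := by positivity
        linarith
    calc wMom μ x ≤ wHat μ 0 := h1
      _ ≤ CL * wHat μ (1 - 1/L) := h2
      _ ≤ CL * wHat μ (1 - 1/x) := by
          refine mul_le_mul_of_nonneg_left h3 (by linarith)
  -- main induction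
  have main : ∀ (j : ℕ) (x : ℝ), 1 ≤ x → x ≤ L * 2 ^ j → wMom μ x ≤ C₄ * wHat μ (1 - 1/x) := by
    intro j
    induction j with
    | zero =>
      intro x hx1 hxL
      simp only [pow_zero, mul_one] at hxL
      have hhat : 0 ≤ wHat μ (1 - 1/x) := by
        refine hat_nonneg hInt hnn ?_ ?_
        · have : 1/x ≤ 1 := by rw [div_le_one (by linarith)]; exact hx1
          linarith
        · have : 0 < 1/x := by positivity
          linarith
      calc wMom μ x ≤ CL * wHat μ (1 - 1/x) := base x hx1 hxL
        _ ≤ C₄ * wHat μ (1 - 1/x) := by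
            refine mul_le_mul_of_nonneg_right (by nlinarith) hhat
    | succ j ih =>
      intro x hx1 hx2
      by_cases hc : x ≤ L * 2 ^ j
      · exact ih x hx1 hc
      push_neg at hc
      have h2j : (1:ℝ) ≤ 2 ^ j := one_le_pow₀ one_le_two
      have hLx : L < x := lt_of_le_of_lt (by nlinarith) hc
      have hx2' : (2:ℝ) ≤ x := le_trans hL2 hLx.le
      have hxpos : (0:ℝ) < x := by linarith
      set δ : ℝ := L / x with hδdef
      have hδpos : 0 < δ := by positivity
      have hδ1 : δ < 1 := by
        rw [hδdef, div_lt_one hxpos]; exact hLx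
      have hc0 : (0:ℝ) ≤ 1 - δ := by linarith
      have hc1 : (1:ℝ) - δ ≤ 1 := by linarith
      have hx0 : (0:ℝ) ≤ x := by linarith
      have hxhalf : 1 ≤ x / 2 := by linarith
      have hxhalf0 : (0:ℝ) ≤ x / 2 := by linarith
      -- split
      have hsplit := mom_split hInt hnn hx0 hc0 hc1
      -- second piece
      have hb2 : (∫ s in (1-δ)..1, s ^ x * μ s) ≤ wHat μ (1 - δ) :=
        mom_le_hat hInt hnn hx0 hc0 hc1
      -- first piece
      have hb1 : (∫ s in (0:ℝ)..(1-δ), s ^ x * μ s)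
          ≤ (1-δ) ^ (x/2) * ∫ s in (0:ℝ)..(1-δ), s ^ (x/2) * μ s := by
        rw [← intervalIntegral.integral_const_mul]
        refine integral_mono_ae_restrict hc0 (w_pow_ii hInt hx0 le_rfl hc0 hc1)
          ((w_pow_ii hInt hxhalf0 le_rfl hc0 hc1).const_mul _) ?_
        refine ae_restrict_iff' measurableSet_Icc |>.mpr
          (Filter.Eventually.of_forall (fun s hs => ?_))
        have hs0 : 0 ≤ s := hs.1
        have hs1 : s ≤ 1 - δ := hs.2
        have hμs : 0 ≤ μ s := hnn s ⟨hs0, by linarith⟩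
        have hsx : s ^ x ≤ (1-δ) ^ (x/2) * s ^ (x/2) := by
          have h1 : s ^ x = s ^ (x/2) * s ^ (x/2) := by
            rw [← Real.rpow_add' hs0 (by intro hh; linarith : x/2 + x/2 ≠ 0)]
            congr 1
            ring
          rw [h1]
          refine mul_le_mul_of_nonneg_right ?_ (Real.rpow_nonneg hs0 _)
          exact Real.rpow_le_rpow hs0 hs1 hxhalf0
        calc s ^ x * μ s ≤ ((1-δ) ^ (x/2) * s ^ (x/2)) * μ s :=
              mul_le_mul_of_nonneg_right hsx hμs
          _ = (1-δ) ^ (x/2) * (s ^ (x/2) * μ s) := by ring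
      have hb1b : (∫ s in (0:ℝ)..(1-δ), s ^ (x/2) * μ s) ≤ wMom μ (x/2) := by
        rw [mom_split hInt hnn hxhalf0 hc0 hc1]
        have : 0 ≤ ∫ s in (1-δ)..1, s ^ (x/2) * μ s :=
          integral_nonneg_of_ae_restrict hc1 (w_pow_ae_nn hInt hnn hxhalf0 hc0 le_rfl)
        linarith
      have hexp : (1-δ) ^ (x/2) ≤ Real.exp (-(L/2)) := by
        have h1 : 1 - δ ≤ Real.exp (-δ) := by
          have := Real.add_one_le_exp (-δ)
          linarith
        calc (1-δ) ^ (x/2) ≤ (Real.exp (-δ)) ^ (x/2) :=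
              Real.rpow_le_rpow hc0 h1 hxhalf0
          _ = Real.exp (-δ * (x/2)) := (Real.exp_mul _ _).symm
          _ = Real.exp (-(L/2)) := by
              congr 1
              rw [hδdef]
              field_simp
      have hih : wMom μ (x/2) ≤ C₄ * wHat μ (1 - 2/x) := by
        have h1 : x / 2 ≤ L * 2 ^ j := by
          rw [div_le_iff₀ (by norm_num : (0:ℝ) < 2)]
          calc x ≤ L * 2 ^ (j+1) := hx2
            _ = L * 2 ^ j * 2 := by ring
        have := ih (x/2) hxhalf h1
        have harg : 1 - 1/(x/2) = 1 - 2/x := by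
          congr 1
          field_simp
        rwa [harg] at this
      have hmono : wHat μ (1 - 2/x) ≤ wHat μ (1 - δ) := by
        refine hat_anti hInt hnn (by linarith) ?_ (by
          have : 0 < 2/x := by positivity
          linarith)
        have h2x : 2/x ≤ δ := by
          rw [hδdef]
          gcongr
        linarith
      -- iterate Dhat from gap L/x down to 1/x
      have hiter : wHat μ (1 - δ) ≤ CL * wHat μ (1 - 1/x) := by
        have h1 := iterD (le_of_lt hC₁) hD l δ hδpos hδ1.le
        have harg : δ / 2 ^ l = 1/x := by
          rw [hδdef, hLdef]
          rw [div_div, div_eq_div_iff (by positivity) (by positivity)]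
          ring
        rwa [harg] at h1
      -- combine
      have hhat_nn : 0 ≤ wHat μ (1 - 1/x) := by
        refine hat_nonneg hInt hnn ?_ ?_
        · have : 1/x ≤ 1 := by rw [div_le_one hxpos]; exact hx1
          linarith
        · have : 0 < 1/x := by positivity
          linarith
      have hhatδ_nn : 0 ≤ wHat μ (1 - δ) := hat_nonneg hInt hnn hc0 hc1
      have hmom_nn : 0 ≤ wMom μ (x/2) := mom_nonneg hInt hnn hxhalf0
      have hchain : wMom μ x ≤ (Real.exp (-(L/2)) * C₄ + 1) * wHat μ (1 - δ) := by
        have e1 : (∫ s in (0:ℝ)..(1-δ), s ^ x * μ s)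
            ≤ Real.exp (-(L/2)) * (C₄ * wHat μ (1 - δ)) := by
          calc (∫ s in (0:ℝ)..(1-δ), s ^ x * μ s)
              ≤ (1-δ) ^ (x/2) * ∫ s in (0:ℝ)..(1-δ), s ^ (x/2) * μ s := hb1
            _ ≤ (1-δ) ^ (x/2) * wMom μ (x/2) := by
                refine mul_le_mul_of_nonneg_left hb1b (Real.rpow_nonneg hc0 _)
            _ ≤ Real.exp (-(L/2)) * wMom μ (x/2) :=
                mul_le_mul_of_nonneg_right hexp hmom_nn
            _ ≤ Real.exp (-(L/2)) * (C₄ * wHat μ (1 - δ)) := by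
                refine mul_le_mul_of_nonneg_left ?_ (Real.exp_nonneg _)
                calc wMom μ (x/2) ≤ C₄ * wHat μ (1 - 2/x) := hih
                  _ ≤ C₄ * wHat μ (1 - δ) := by
                      refine mul_le_mul_of_nonneg_left hmono (by linarith)
        rw [hsplit]
        nlinarith [hb2]
      -- final constant arithmetic
      have hfinal : (Real.exp (-(L/2)) * C₄ + 1) * CL ≤ C₄ := by
        have h1 : Real.exp (-(L/2)) * Real.exp (L/2) = 1 := by
          rw [← Real.exp_add]; simp
        have h2 : 2 * CL ≤ Real.exp (L/2) := by
          have : Real.exp ((2:ℝ)^l / 2) = Real.exp (L/2) := by rw [hLdef]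
          rw [← this]; exact hlkey
        have hexp_pos : 0 < Real.exp (-(L/2)) := Real.exp_pos _
        have h3 : Real.exp (-(L/2)) * (2 * CL) ≤ 1 := by
          calc Real.exp (-(L/2)) * (2 * CL) ≤ Real.exp (-(L/2)) * Real.exp (L/2) :=
                mul_le_mul_of_nonneg_left h2 hexp_pos.le
            _ = 1 := h1
        have hCLpos : (0:ℝ) < CL := by linarith
        calc (Real.exp (-(L/2)) * C₄ + 1) * CL
            = (Real.exp (-(L/2)) * (2 * CL)) * CL + CL := by rw [hC₄def]; ring
          _ ≤ 1 * CL + CL := by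
              have := mul_le_mul_of_nonneg_right h3 (le_of_lt hCLpos)
              linarith
          _ = C₄ := by rw [hC₄def]; ring
      calc wMom μ x ≤ (Real.exp (-(L/2)) * C₄ + 1) * wHat μ (1 - δ) := hchain
        _ ≤ (Real.exp (-(L/2)) * C₄ + 1) * (CL * wHat μ (1 - 1/x)) := by
            refine mul_le_mul_of_nonneg_left hiter ?_
            have h9 := Real.exp_nonneg (-(L/2))
            have h8 : (0:ℝ) ≤ Real.exp (-(L/2)) * C₄ := mul_nonneg h9 (by linarith)
            linarith
        _ = ((Real.exp (-(L/2)) * C₄ + 1) * CL) * wHat μ (1 - 1/x) := by ring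
        _ ≤ C₄ * wHat μ (1 - 1/x) := mul_le_mul_of_nonneg_right hfinal hhat_nn
  refine ⟨C₄, hC₄1, fun x hx1 => ?_⟩
  obtain ⟨j, hj⟩ := pow_unbounded_of_one_lt (x / L) one_lt_two
  refine main j x hx1 ?_
  rw [div_lt_iff₀ hLpos] at hj
  nlinarith [one_le_pow₀ (one_le_two (α := ℝ)) (n := j)]

end LemmaA

theorem lintegral_comp_polarCoord_symm_real (f : ℝ × ℝ → ℝ≥0∞) :
    (∫⁻ p in polarCoord.target, ENNReal.ofReal p.1 * f (polarCoord.symm p)) = ∫⁻ p, f p := by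
  set B : ℝ × ℝ → ℝ × ℝ →L[ℝ] ℝ × ℝ := fun p =>
    LinearMap.toContinuousLinearMap (Matrix.toLin (Module.Basis.finTwoProd ℝ) (Module.Basis.finTwoProd ℝ)
      !![Real.cos p.2, -p.1 * Real.sin p.2; Real.sin p.2, p.1 * Real.cos p.2])
  have B_det : ∀ p, (B p).det = p.1 := by
    intro p
    conv_rhs => rw [← one_mul p.1, ← cos_sq_add_sin_sq p.2]
    simp only [B, neg_mul, LinearMap.det_toContinuousLinearMap, LinearMap.det_toLin,
      Matrix.det_fin_two_of, sub_neg_eq_add]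
    ring
  symm
  calc
    ∫⁻ p, f p = ∫⁻ p in polarCoord.source, f p := by
      rw [← setLIntegral_univ]
      exact (setLIntegral_congr polarCoord_source_ae_eq_univ.symm)
    _ = ∫⁻ p in polarCoord.symm '' polarCoord.target, f p := by
      rw [polarCoord.symm_image_target_eq_source]
    _ = ∫⁻ p in polarCoord.target, ENNReal.ofReal |(B p).det| * f (polarCoord.symm p) := by
      apply lintegral_image_eq_lintegral_abs_det_fderiv_mul volume
        polarCoord.open_target.measurableSet
        (fun p _ => (hasFDerivAt_polarCoord_symm p).hasFDerivWithinAt)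
      exact polarCoord.symm.injOn
    _ = ∫⁻ p in polarCoord.target, ENNReal.ofReal p.1 * f (polarCoord.symm p) := by
      refine setLIntegral_congr_fun polarCoord.open_target.measurableSet
        (fun p hp => ?_)
      rw [B_det, abs_of_pos hp.1]

theorem Complex.lintegral_comp_polarCoord_symm' (f : ℂ → ℝ≥0∞) :
    (∫⁻ p in polarCoord.target, ENNReal.ofReal p.1 * f (Complex.polarCoord.symm p)) = ∫⁻ z, f z := by
  rw [← (Complex.volume_preserving_equiv_real_prod.symm).lintegral_comp_emb
    Complex.measurableEquivRealProd.symm.measurableEmbedding, ← lintegral_comp_polarCoord_symm_real]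
  rfl

theorem lintegral_ball_radial (F : ℝ → ℝ≥0∞) (hF : Measurable F) :
    (∫⁻ z in Metric.ball (0:ℂ) 1, F ‖z‖) =
      ENNReal.ofReal (2 * π) * ∫⁻ s in Ioo (0:ℝ) 1, ENNReal.ofReal s * F s := by
  have h1 : (∫⁻ z in Metric.ball (0:ℂ) 1, F ‖z‖) =
      ∫⁻ z, (Metric.ball (0:ℂ) 1).indicator (fun z => F ‖z‖) z := by
    rw [lintegral_indicator measurableSet_ball]
  rw [h1, ← Complex.lintegral_comp_polarCoord_symm']
  have h2 : ∀ p ∈ polarCoord.target,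
      ENNReal.ofReal p.1 * (Metric.ball (0:ℂ) 1).indicator (fun z => F ‖z‖)
        (Complex.polarCoord.symm p)
      = (Ioo (0:ℝ) 1).indicator (fun s => ENNReal.ofReal s * F s) p.1 := by
    classical
    rintro ⟨r, θ⟩ hp
    have hr : 0 < r := hp.1
    have hnorm : ‖Complex.polarCoord.symm (r, θ)‖ = r := by
      rw [Complex.norm_polarCoord_symm]
      exact abs_of_pos hr
    rw [Set.indicator_apply, Set.indicator_apply, mem_ball_zero_iff, hnorm]
    by_cases hlt : r < 1
    · rw [if_pos hlt, if_pos (show (r, θ).1 ∈ Ioo (0:ℝ) 1 from ⟨hr, hlt⟩)]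
    · rw [if_neg hlt, if_neg (show (r, θ).1 ∉ Ioo (0:ℝ) 1 from fun h => hlt h.2), mul_zero]
  rw [setLIntegral_congr_fun polarCoord.open_target.measurableSet
    h2]
  have h3 : (volume : Measure (ℝ × ℝ)).restrict polarCoord.target
      = (volume.restrict (Ioi (0:ℝ))).prod (volume.restrict (Ioo (-π) π)) := by
    rw [Measure.volume_eq_prod, Measure.prod_restrict]
    rfl
  rw [h3]
  have hmeas : Measurable fun p : ℝ × ℝ =>
      (Ioo (0:ℝ) 1).indicator (fun s => ENNReal.ofReal s * F s) p.1 :=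
    ((ENNReal.measurable_ofReal.mul hF).indicator measurableSet_Ioo).comp measurable_fst
  rw [lintegral_prod _ hmeas.aemeasurable]
  simp only [lintegral_const, Measure.restrict_apply MeasurableSet.univ, univ_inter]
  rw [Real.volume_Ioo]
  have : π - -π = 2 * π := by ring
  rw [this, lintegral_mul_const _ (f := (Ioo (0:ℝ) 1).indicator (fun s => ENNReal.ofReal s * F s))
    ((ENNReal.measurable_ofReal.mul hF).indicator measurableSet_Ioo), lintegral_indicator measurableSet_Ioo,
    Measure.restrict_restrict measurableSet_Ioo,
    inter_eq_self_of_subset_left (fun x hx => hx.1), mul_comm]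

lemma radial_null {S : Set ℝ} (hS : volume S = 0) :
    volume {z : ℂ | z ∈ Metric.ball (0:ℂ) 1 ∧ ‖z‖ ∈ S} = 0 := by
  set S' := toMeasurable volume S with hS'def
  have hS'null : volume S' = 0 := by rw [hS'def, measure_toMeasurable]; exact hS
  have hmS' : MeasurableSet S' := measurableSet_toMeasurable _ _
  have hSS' : S ⊆ S' := subset_toMeasurable _ _
  have key : (∫⁻ z in Metric.ball (0:ℂ) 1, S'.indicator (1 : ℝ → ℝ≥0∞) ‖z‖) = 0 := by
    rw [lintegral_ball_radial _ (measurable_one.indicator hmS')]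
    have hb : (∫⁻ s in Ioo (0:ℝ) 1, ENNReal.ofReal s * S'.indicator (1 : ℝ → ℝ≥0∞) s)
        ≤ ∫⁻ s in Ioo (0:ℝ) 1, S'.indicator (1 : ℝ → ℝ≥0∞) s := by
      refine lintegral_mono_ae ?_
      filter_upwards [ae_restrict_mem measurableSet_Ioo] with s hs
      by_cases hmem : s ∈ S'
      · rw [Set.indicator_of_mem hmem, Pi.one_apply, mul_one]
        exact ENNReal.ofReal_le_one.mpr hs.2.le
      · rw [Set.indicator_of_notMem hmem, mul_zero]
    have hz : (∫⁻ s in Ioo (0:ℝ) 1, S'.indicator (1 : ℝ → ℝ≥0∞) s) = 0 := by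
      rw [lintegral_indicator_one hmS', Measure.restrict_apply hmS']
      exact measure_mono_null inter_subset_left hS'null
    rw [hz] at hb
    have h0 := le_antisymm hb zero_le
    rw [h0, mul_zero]
  have key2 : (volume.restrict (Metric.ball (0:ℂ) 1)) ((fun z : ℂ => ‖z‖) ⁻¹' S') = 0 := by
    have heq : ∀ z : ℂ, S'.indicator (1 : ℝ → ℝ≥0∞) ‖z‖
        = ((fun z : ℂ => ‖z‖) ⁻¹' S').indicator (1 : ℂ → ℝ≥0∞) z := by
      intro z
      by_cases hz : ‖z‖ ∈ S'
      · rw [Set.indicator_of_mem hz, Set.indicator_of_mem (mem_preimage.mpr hz),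
          Pi.one_apply, Pi.one_apply]
      · rw [Set.indicator_of_notMem hz,
          Set.indicator_of_notMem (fun hc => hz (mem_preimage.mp hc))]
    rw [← lintegral_indicator_one (hmS'.preimage measurable_norm), ← key]
    exact lintegral_congr fun z => (heq z).symm
  have hsub : {z : ℂ | z ∈ Metric.ball (0:ℂ) 1 ∧ ‖z‖ ∈ S}
      ⊆ ((fun z : ℂ => ‖z‖) ⁻¹' S') ∩ Metric.ball (0:ℂ) 1 := fun z hz => ⟨hSS' hz.2, hz.1⟩
  refine measure_mono_null hsub ?_
  rwa [← Measure.restrict_apply' measurableSet_ball]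

lemma hat_lint {g : ℝ → ℝ} (hInt : IntegrableOn g (Ico 0 1)) (hg : ∀ s, 0 ≤ g s)
    {a : ℝ} (h0 : 0 ≤ a) (ha : a ≤ 1) :
    (∫⁻ s in Ioo a 1, ENNReal.ofReal (g s)) = ENNReal.ofReal (wHat g a) := by
  have hi : IntegrableOn g (Ioo a 1) :=
    (w_icc hInt).mono_set (fun s hs => ⟨le_trans h0 hs.1.le, hs.2.le⟩)
  have h1 : wHat g a = ∫ s in Ioo a 1, g s := by
    rw [wHat, intervalIntegral.integral_of_le ha, integral_Ioc_eq_integral_Ioo]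
  rw [h1, ofReal_integral_eq_lintegral_ofReal hi (Filter.Eventually.of_forall hg)]

lemma expE {t y : ℝ} (ht0 : 0 < t) (ht : t ≤ 1/8) (hy : 0 ≤ y) :
    Real.exp (-(8*t*y)) ≤ (1 - 4*t) ^ y := by
  have h4t : 0 < 1 - 4*t := by linarith
  have h1 : Real.exp (-(8*t)) ≤ 1 - 4*t := by
    have he : 1 + 8*t ≤ Real.exp (8*t) := by
      have := Real.add_one_le_exp (8*t); linarith
    have hexppos : 0 < Real.exp (8*t) := Real.exp_pos _
    have hkey : 1 ≤ (1 - 4*t) * Real.exp (8*t) := by nlinarith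
    rw [Real.exp_neg, inv_eq_one_div, div_le_iff₀ hexppos]
    linarith [hkey]
  calc Real.exp (-(8*t*y)) = (Real.exp (-(8*t))) ^ y := by
        rw [← Real.exp_mul]; congr 1; ring
    _ ≤ (1 - 4*t) ^ y := Real.rpow_le_rpow (Real.exp_nonneg _) h1 hy

lemma mom_pos {ν : ℝ → ℝ} (hInt : IntegrableOn ν (Ico 0 1))
    (hnn : ∀ s ∈ Ico (0:ℝ) 1, 0 ≤ ν s) (hpos : ∀ r ∈ Ico (0:ℝ) 1, 0 < wHat ν r)
    {x : ℝ} (hx : 0 ≤ x) : 0 < wMom ν x := by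
  have h1 := mom_tail_lower hInt hnn hx (by norm_num : (0:ℝ) ≤ 1/2) (by norm_num)
  have h2 : 0 < wHat ν (1/2) := hpos _ ⟨by norm_num, by norm_num⟩
  have h3 : (0:ℝ) < (1/2:ℝ) ^ x := Real.rpow_pos_of_pos (by norm_num) x
  nlinarith

lemma key_step {w : ℝ → ℝ} (hw_meas : Measurable w) (hw_nn : ∀ s, 0 ≤ w s)
    (hw_int : IntegrableOn w (Ico 0 1))
    {μ : ℝ → ℝ} (hμ_int : IntegrableOn μ (Ico 0 1)) (hμ_nn : ∀ s ∈ Ico (0:ℝ) 1, 0 ≤ μ s)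
    {p : ℝ} (hp : 0 < p) {c : ℝ} (hc : 0 < c)
    {N : ℝ} (hN : 0 ≤ N) {t : ℝ} (ht0 : 0 < t) (ht : t ≤ 1/8)
    (hmain : (∫⁻ z in Metric.ball (0:ℂ) 1,
        ENNReal.ofReal (‖z‖ ^ N * (wHat μ ‖z‖ ^ p * w ‖z‖)))
      ≤ ENNReal.ofReal c * ∫⁻ z in Metric.ball (0:ℂ) 1, ENNReal.ofReal (‖z‖ ^ N * w ‖z‖))
    (hCB : 2 * c ≤ wHat μ (1 - t) ^ p) :
    (1 - 4*t) ^ N * (1 - 4*t) * wHat w (1 - 4*t) ≤ 2 * wHat w (1 - t) := by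
  have hw_nn' : ∀ s ∈ Ico (0:ℝ) 1, 0 ≤ w s := fun s _ => hw_nn s
  set ρ : ℝ := 1 - t with hρdef
  set σ : ℝ := 1 - 4*t with hσdef
  have hρ0 : (0:ℝ) ≤ ρ := by rw [hρdef]; linarith
  have hρ1 : ρ < 1 := by rw [hρdef]; linarith
  have hσ0 : (0:ℝ) ≤ σ := by rw [hσdef]; linarith
  have hσhalf : (1/2:ℝ) ≤ σ := by rw [hσdef]; linarith
  have hσ1 : σ < 1 := by rw [hσdef]; linarith
  have hσρ : σ ≤ ρ := by rw [hσdef, hρdef]; linarith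
  set F : ℝ → ℝ≥0∞ := fun s => ENNReal.ofReal (s ^ N * w s) with hFdef
  set F₁ : ℝ → ℝ≥0∞ := fun s => if s ≤ ρ then F s else 0 with hF₁def
  set F₂ : ℝ → ℝ≥0∞ := fun s => if ρ < s then F s else 0 with hF₂def
  have hF : Measurable F :=
    ((Real.continuous_rpow_const hN).measurable.mul hw_meas).ennreal_ofReal
  have hF₁ : Measurable F₁ := by
    refine Measurable.ite ?_ hF measurable_const
    exact measurableSet_Iic
  have hF₂ : Measurable F₂ := by
    refine Measurable.ite ?_ hF measurable_const
    exact measurableSet_Ioi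
  set I : ℝ≥0∞ := ∫⁻ z in Metric.ball (0:ℂ) 1, F ‖z‖ with hIdef
  set J : ℝ≥0∞ := ∫⁻ z in Metric.ball (0:ℂ) 1, F₁ ‖z‖ with hJdef
  set K₂ : ℝ≥0∞ := ∫⁻ z in Metric.ball (0:ℂ) 1, F₂ ‖z‖ with hK₂def
  have hsplitF : ∀ s : ℝ, F s = F₁ s + F₂ s := by
    intro s
    by_cases hs : s ≤ ρ
    · rw [hF₁def, hF₂def]; simp only [if_pos hs, if_neg (not_lt.mpr hs), add_zero]
    · rw [hF₁def, hF₂def]; simp only [if_neg hs, if_pos (not_le.mp hs), zero_add]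
  have hIJK : I = J + K₂ := by
    calc I = ∫⁻ z in Metric.ball (0:ℂ) 1, (F₁ ‖z‖ + F₂ ‖z‖) :=
          lintegral_congr fun z => hsplitF ‖z‖
      _ = J + K₂ := lintegral_add_left (hF₁.comp measurable_norm) _
  have hμhatρ_nn : 0 ≤ wHat μ ρ := hat_nonneg hμ_int hμ_nn hρ0 hρ1.le
  -- Step 1
  have step1 : ENNReal.ofReal (wHat μ ρ ^ p) * J
      ≤ ∫⁻ z in Metric.ball (0:ℂ) 1, ENNReal.ofReal (‖z‖ ^ N * (wHat μ ‖z‖ ^ p * w ‖z‖)) := by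
    have hcm : Measurable fun z : ℂ => F₁ ‖z‖ := hF₁.comp measurable_norm
    rw [hJdef, ← lintegral_const_mul _ hcm]
    refine lintegral_mono_ae ?_
    filter_upwards [ae_restrict_mem measurableSet_ball] with z hz
    by_cases hle : ‖z‖ ≤ ρ
    · have hz1 : ‖z‖ < 1 := mem_ball_zero_iff.mp hz
      have hz0 : (0:ℝ) ≤ ‖z‖ := norm_nonneg z
      have heq : F₁ ‖z‖ = F ‖z‖ := if_pos hle
      rw [heq, hFdef]
      rw [← ENNReal.ofReal_mul (Real.rpow_nonneg hμhatρ_nn p)]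
      apply ENNReal.ofReal_le_ofReal
      have hhat_le : wHat μ ρ ≤ wHat μ ‖z‖ := hat_anti hμ_int hμ_nn hz0 hle hρ1.le
      have hr : wHat μ ρ ^ p ≤ wHat μ ‖z‖ ^ p := Real.rpow_le_rpow hμhatρ_nn hhat_le hp.le
      have hw0 := hw_nn ‖z‖
      have hzN : (0:ℝ) ≤ ‖z‖ ^ N := Real.rpow_nonneg hz0 N
      calc wHat μ ρ ^ p * (‖z‖ ^ N * w ‖z‖) ≤ wHat μ ‖z‖ ^ p * (‖z‖ ^ N * w ‖z‖) :=
            mul_le_mul_of_nonneg_right hr (mul_nonneg hzN hw0)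
        _ = ‖z‖ ^ N * (wHat μ ‖z‖ ^ p * w ‖z‖) := by ring
    · have heq : F₁ ‖z‖ = 0 := if_neg hle
      rw [heq, mul_zero]
      exact zero_le
  -- Step 2 : 2*J ≤ I
  have hcne : ENNReal.ofReal c ≠ 0 := (ENNReal.ofReal_pos.mpr hc).ne'
  have step2 : 2 * J ≤ I := by
    have h2c : ENNReal.ofReal (2*c) * J ≤ ENNReal.ofReal c * I := by
      calc ENNReal.ofReal (2*c) * J ≤ ENNReal.ofReal (wHat μ ρ ^ p) * J :=
            mul_le_mul_left (ENNReal.ofReal_le_ofReal hCB) J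
        _ ≤ _ := step1
        _ ≤ ENNReal.ofReal c * I := hmain
    have hof2 : ENNReal.ofReal (2*c) = 2 * ENNReal.ofReal c := by
      rw [ENNReal.ofReal_mul (by norm_num : (0:ℝ) ≤ 2)]
      norm_num
    rw [hof2] at h2c
    have h2c' : ENNReal.ofReal c * (2 * J) ≤ ENNReal.ofReal c * I := by
      calc ENNReal.ofReal c * (2 * J) = 2 * ENNReal.ofReal c * J := by ring
        _ ≤ ENNReal.ofReal c * I := h2c
    exact (ENNReal.mul_le_mul_iff_right hcne ENNReal.ofReal_ne_top).mp h2c'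
  -- radial formulas
  have hIrad : I = ENNReal.ofReal (2*π) * ∫⁻ s in Ioo (0:ℝ) 1, ENNReal.ofReal s * F s :=
    lintegral_ball_radial F hF
  have hK₂rad : K₂ = ENNReal.ofReal (2*π) * ∫⁻ s in Ioo (0:ℝ) 1, ENNReal.ofReal s * F₂ s :=
    lintegral_ball_radial F₂ hF₂
  have hIfin : I ≠ ⊤ := by
    rw [hIrad]
    refine ENNReal.mul_ne_top ENNReal.ofReal_ne_top ?_
    have hle : (∫⁻ s in Ioo (0:ℝ) 1, ENNReal.ofReal s * F s)
        ≤ ∫⁻ s in Ioo (0:ℝ) 1, ENNReal.ofReal (w s) := by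
      refine lintegral_mono_ae ?_
      filter_upwards [ae_restrict_mem measurableSet_Ioo] with s hs
      rw [hFdef, ← ENNReal.ofReal_mul hs.1.le]
      apply ENNReal.ofReal_le_ofReal
      have hsN : s ^ N ≤ 1 := Real.rpow_le_one hs.1.le hs.2.le hN
      have hsN0 : (0:ℝ) ≤ s ^ N := Real.rpow_nonneg hs.1.le N
      have hw0 := hw_nn s
      have hss : s * s ^ N ≤ 1 := by nlinarith [hs.1.le, hs.2.le]
      calc s * (s ^ N * w s) = (s * s ^ N) * w s := by ring
        _ ≤ 1 * w s := mul_le_mul_of_nonneg_right hss hw0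
        _ = w s := one_mul _
    refine ne_top_of_le_ne_top (ENNReal.ofReal_ne_top : ENNReal.ofReal (wHat w 0) ≠ ⊤) ?_
    rw [← hat_lint hw_int hw_nn le_rfl zero_le_one]
    exact hle
  have hJfin : J ≠ ⊤ := ne_top_of_le_ne_top hIfin (hIJK ▸ le_self_add)
  have step3 : J ≤ K₂ := by
    have h2J : J + J ≤ J + K₂ := by
      rw [← two_mul, ← hIJK]; exact step2
    exact (ENNReal.add_le_add_iff_left hJfin).mp h2J
  have hIle : I ≤ 2 * K₂ := by
    rw [hIJK, two_mul]
    exact add_le_add_left step3 K₂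
  -- upper bound for K₂
  have hK₂le : K₂ ≤ ENNReal.ofReal (2*π) * ENNReal.ofReal (wHat w ρ) := by
    rw [hK₂rad]
    refine mul_le_mul_right ?_ _
    calc (∫⁻ s in Ioo (0:ℝ) 1, ENNReal.ofReal s * F₂ s)
        ≤ ∫⁻ s in Ioo (0:ℝ) 1, (Ioo ρ 1).indicator (fun s => ENNReal.ofReal (w s)) s := by
          refine lintegral_mono_ae ?_
          filter_upwards [ae_restrict_mem measurableSet_Ioo] with s hs
          by_cases hρs : ρ < s
          · have heq : F₂ s = F s := if_pos hρs
            rw [heq]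
            rw [Set.indicator_of_mem (show s ∈ Ioo ρ 1 from ⟨hρs, hs.2⟩)]
            rw [hFdef, ← ENNReal.ofReal_mul hs.1.le]
            apply ENNReal.ofReal_le_ofReal
            have hsN : s ^ N ≤ 1 := Real.rpow_le_one hs.1.le hs.2.le hN
            have hsN0 : (0:ℝ) ≤ s ^ N := Real.rpow_nonneg hs.1.le N
            have hw0 := hw_nn s
            have hss : s * s ^ N ≤ 1 := by nlinarith [hs.1.le, hs.2.le]
            calc s * (s ^ N * w s) = (s * s ^ N) * w s := by ring
              _ ≤ 1 * w s := mul_le_mul_of_nonneg_right hss hw0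
              _ = w s := one_mul _
          · have heq : F₂ s = 0 := if_neg hρs
            rw [heq, mul_zero]
            exact zero_le
      _ = ∫⁻ s in Ioo ρ 1, ENNReal.ofReal (w s) := by
          have hsub : Ioo ρ 1 ⊆ Ioo (0:ℝ) 1 := fun x hx => ⟨lt_of_le_of_lt hρ0 hx.1, hx.2⟩
          rw [lintegral_indicator measurableSet_Ioo,
            Measure.restrict_restrict measurableSet_Ioo,
            inter_eq_self_of_subset_left hsub]
      _ = ENNReal.ofReal (wHat w ρ) := hat_lint hw_int hw_nn hρ0 hρ1.le
  -- lower bound for I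
  have hσσN : (0:ℝ) ≤ σ ^ N * σ := mul_nonneg (Real.rpow_nonneg hσ0 N) hσ0
  have hIge : ENNReal.ofReal (2*π) * ENNReal.ofReal ((σ ^ N * σ) * wHat w σ) ≤ I := by
    rw [hIrad]
    refine mul_le_mul_right ?_ _
    calc ENNReal.ofReal ((σ ^ N * σ) * wHat w σ)
        = ENNReal.ofReal (σ ^ N * σ) * ENNReal.ofReal (wHat w σ) := ENNReal.ofReal_mul hσσN
      _ = ENNReal.ofReal (σ ^ N * σ) * ∫⁻ s in Ioo σ 1, ENNReal.ofReal (w s) := by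
          rw [hat_lint hw_int hw_nn hσ0 hσ1.le]
      _ = ∫⁻ s in Ioo σ 1, ENNReal.ofReal (σ ^ N * σ) * ENNReal.ofReal (w s) :=
          (lintegral_const_mul _ hw_meas.ennreal_ofReal).symm
      _ ≤ ∫⁻ s in Ioo σ 1, ENNReal.ofReal s * F s := by
          refine lintegral_mono_ae ?_
          filter_upwards [ae_restrict_mem measurableSet_Ioo] with s hs
          rw [hFdef, ← ENNReal.ofReal_mul hσσN, ← ENNReal.ofReal_mul (le_trans hσ0 hs.1.le)]
          apply ENNReal.ofReal_le_ofReal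
          have h1 : σ ^ N ≤ s ^ N := Real.rpow_le_rpow hσ0 hs.1.le hN
          have hw0 := hw_nn s
          have hσN0 : (0:ℝ) ≤ σ ^ N := Real.rpow_nonneg hσ0 N
          have h2 : σ ^ N * σ ≤ s ^ N * s :=
            mul_le_mul h1 hs.1.le hσ0 (le_trans hσN0 h1)
          calc σ ^ N * σ * w s ≤ (s ^ N * s) * w s := mul_le_mul_of_nonneg_right h2 hw0
            _ = s * (s ^ N * w s) := by ring
      _ ≤ ∫⁻ s in Ioo (0:ℝ) 1, ENNReal.ofReal s * F s :=
          lintegral_mono_set (fun x hx => ⟨lt_of_le_of_lt hσ0 hx.1, hx.2⟩)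
  -- combine
  have hhatρ_nn : 0 ≤ wHat w ρ := hat_nonneg hw_int hw_nn' hρ0 hρ1.le
  have hchain : ENNReal.ofReal (2*π) * ENNReal.ofReal ((σ ^ N * σ) * wHat w σ)
      ≤ ENNReal.ofReal (2*π) * ENNReal.ofReal (2 * wHat w ρ) := by
    have hr : ENNReal.ofReal (2 * wHat w ρ) = 2 * ENNReal.ofReal (wHat w ρ) := by
      rw [ENNReal.ofReal_mul (by norm_num : (0:ℝ) ≤ 2)]
      norm_num
    calc ENNReal.ofReal (2*π) * ENNReal.ofReal ((σ ^ N * σ) * wHat w σ) ≤ I := hIge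
      _ ≤ 2 * K₂ := hIle
      _ ≤ 2 * (ENNReal.ofReal (2*π) * ENNReal.ofReal (wHat w ρ)) := mul_le_mul_right hK₂le 2
      _ = ENNReal.ofReal (2*π) * ENNReal.ofReal (2 * wHat w ρ) := by rw [hr]; ring
  have hπne : ENNReal.ofReal (2*π) ≠ 0 := by
    refine (ENNReal.ofReal_pos.mpr ?_).ne'
    positivity
  have hfin := (ENNReal.mul_le_mul_iff_right hπne ENNReal.ofReal_ne_top).mp hchain
  have := (ENNReal.ofReal_le_ofReal_iff (by linarith : (0:ℝ) ≤ 2 * wHat w ρ)).mp hfin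
  linarith
set_option maxHeartbeats 2000000 in
/-- **Theorem (monomial test for `D̂`).** Let `ω` be a radial weight, `0 < p < ∞` and
`μ ∈ D`.  If there is `C > 0` with
`∫_𝔻 |z|^{np} μ̂(z)^p ω(z) dA ≤ C μ_{2n+1}^p ∫_𝔻 |z|^{np} ω(z) dA` for all `n ∈ ℕ ∪ {0}`,
then `ω ∈ D̂`. -/
theorem Dhat_of_monomial_littlewood_paley (ω μ : ℝ → ℝ) (hω : IsRadialWeight ω)
    (p : ℝ) (hp : 0 < p) (hμ : IsRadialWeight μ) (hμD : Dclass μ)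
    (h : ∃ C > (0:ℝ), ∀ n : ℕ,
      (∫⁻ z in Metric.ball (0:ℂ) 1,
          ENNReal.ofReal (‖z‖ ^ ((n : ℝ) * p) * (wHat μ ‖z‖ ^ p * ω ‖z‖))) ≤
        ENNReal.ofReal (C * wMom μ (2 * (n : ℝ) + 1) ^ p) *
          ∫⁻ z in Metric.ball (0:ℂ) 1, ENNReal.ofReal (‖z‖ ^ ((n : ℝ) * p) * ω ‖z‖)) :
    Dhat ω := by
  obtain ⟨hω_nn, hω_int, hω_pos⟩ := hω
  obtain ⟨hμ_nn, hμ_int, hμ_pos⟩ := hμ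
  obtain ⟨⟨C₁, hC₁, hDμ⟩, k, hk, C₂, hC₂, hDcμ⟩ := hμD
  obtain ⟨C, hC, hLP⟩ := h
  obtain ⟨C₄, hC₄, hA⟩ := momA hμ_int hμ_nn hC₁ hDμ
  -- measurable replacement for ω
  set g : ℝ → ℝ := hω_int.1.mk ω with hgdef
  have hg_meas : Measurable g := hω_int.1.stronglyMeasurable_mk.measurable
  have haeg : ω =ᵐ[volume.restrict (Ico 0 1)] g := hω_int.1.ae_eq_mk
  set S : Set ℝ := {s | ω s ≠ g s} ∩ Ico 0 1 with hSdef
  have hSnull : volume S = 0 := by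
    have h0 := ae_iff.mp haeg
    rw [Measure.restrict_apply' measurableSet_Ico] at h0
    exact h0
  set ω' : ℝ → ℝ := fun s => max ((Ico (0:ℝ) 1).indicator g s) 0 with hω'def
  have hω'_meas : Measurable ω' :=
    (hg_meas.indicator measurableSet_Ico).max measurable_const
  have hω'_nn : ∀ s, 0 ≤ ω' s := fun s => le_max_right _ _
  have hω'_eq : ∀ s, s ∈ Ico (0:ℝ) 1 → s ∉ S → ω' s = ω s := by
    intro s hs hns
    have hgs : ω s = g s := by
      by_contra hne
      exact hns ⟨hne, hs⟩
    rw [hω'def]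
    simp only
    rw [Set.indicator_of_mem hs, ← hgs, max_eq_left (hω_nn s hs)]
  have hnotS : ∀ᵐ s : ℝ ∂volume, s ∉ S := by
    rw [ae_iff]
    have hset : {s : ℝ | ¬ s ∉ S} = S := by ext s; simp
    rw [hset]
    exact hSnull
  have hω'_int : IntegrableOn ω' (Ico 0 1) := by
    refine hω_int.congr ?_
    refine (ae_restrict_iff' measurableSet_Ico).mpr ?_
    filter_upwards [hnotS] with s hns hs
    exact (hω'_eq s hs hns).symm
  have hω'_nn' : ∀ s ∈ Ico (0:ℝ) 1, 0 ≤ ω' s := fun s _ => hω'_nn s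
  have hhat_eq : ∀ a : ℝ, 0 ≤ a → a ≤ 1 → wHat ω' a = wHat ω a := by
    intro a h0 h1
    show (∫ s in a..1, ω' s) = ∫ s in a..1, ω s
    refine intervalIntegral.integral_congr_ae ?_
    filter_upwards [hnotS, ae_ne_one] with s hns hs1 hmem
    rw [uIoc_of_le h1] at hmem
    have hsIco : s ∈ Ico (0:ℝ) 1 := ⟨le_trans h0 hmem.1.le, lt_of_le_of_ne hmem.2 hs1⟩
    exact hω'_eq s hsIco hns
  have hball : ∀ᵐ z : ℂ ∂(volume.restrict (Metric.ball (0:ℂ) 1)), ω ‖z‖ = ω' ‖z‖ := by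
    have h1 : (volume.restrict (Metric.ball (0:ℂ) 1))
        {z : ℂ | z ∈ Metric.ball (0:ℂ) 1 ∧ ‖z‖ ∈ S} = 0 := by
      rw [Measure.restrict_apply' measurableSet_ball]
      exact measure_mono_null inter_subset_left (radial_null hSnull)
    have h2 : ∀ᵐ z : ℂ ∂(volume.restrict (Metric.ball (0:ℂ) 1)),
        ¬(z ∈ Metric.ball (0:ℂ) 1 ∧ ‖z‖ ∈ S) := by
      rw [ae_iff]
      have hset : {z : ℂ | ¬ ¬ (z ∈ Metric.ball (0:ℂ) 1 ∧ ‖z‖ ∈ S)}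
          = {z : ℂ | z ∈ Metric.ball (0:ℂ) 1 ∧ ‖z‖ ∈ S} := by ext z; simp
      rw [hset]
      exact h1
    filter_upwards [ae_restrict_mem measurableSet_ball, h2] with z hz hz2
    have hnorm : ‖z‖ ∈ Ico (0:ℝ) 1 := ⟨norm_nonneg z, mem_ball_zero_iff.mp hz⟩
    have hzn : ‖z‖ ∉ S := fun hzS => hz2 ⟨hz, hzS⟩
    exact (hω'_eq ‖z‖ hnorm hzn).symm
  have hLP' : ∀ n : ℕ,
      (∫⁻ z in Metric.ball (0:ℂ) 1,
          ENNReal.ofReal (‖z‖ ^ ((n : ℝ) * p) * (wHat μ ‖z‖ ^ p * ω' ‖z‖))) ≤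
        ENNReal.ofReal (C * wMom μ (2 * (n : ℝ) + 1) ^ p) *
          ∫⁻ z in Metric.ball (0:ℂ) 1, ENNReal.ofReal (‖z‖ ^ ((n : ℝ) * p) * ω' ‖z‖) := by
    intro n
    have e1 : (∫⁻ z in Metric.ball (0:ℂ) 1,
        ENNReal.ofReal (‖z‖ ^ ((n : ℝ) * p) * (wHat μ ‖z‖ ^ p * ω ‖z‖)))
        = ∫⁻ z in Metric.ball (0:ℂ) 1,
          ENNReal.ofReal (‖z‖ ^ ((n : ℝ) * p) * (wHat μ ‖z‖ ^ p * ω' ‖z‖)) :=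
      lintegral_congr_ae (hball.mono (fun z hz => by simp only [hz]))
    have e2 : (∫⁻ z in Metric.ball (0:ℂ) 1,
        ENNReal.ofReal (‖z‖ ^ ((n : ℝ) * p) * ω ‖z‖))
        = ∫⁻ z in Metric.ball (0:ℂ) 1,
          ENNReal.ofReal (‖z‖ ^ ((n : ℝ) * p) * ω' ‖z‖) :=
      lintegral_congr_ae (hball.mono (fun z hz => by simp only [hz]))
    rw [← e1, ← e2]
    exact hLP n
  -- constants
  set A : ℝ := (2*C) ^ (1/p) with hAdef
  have hApos : 0 < A := Real.rpow_pos_of_pos (by linarith) _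
  have hAp : A ^ p = 2 * C := by
    rw [hAdef, ← Real.rpow_mul (by linarith : (0:ℝ) ≤ 2*C),
      one_div_mul_cancel hp.ne', Real.rpow_one]
  obtain ⟨m, hm⟩ := pow_unbounded_of_one_lt (A * C₄) hC₂
  set K : ℝ := k ^ m with hKdef
  have hK1 : (1:ℝ) ≤ K := one_le_pow₀ hk.le
  have hKpos : (0:ℝ) < K := by linarith
  set e₀ : ℝ := Real.exp (-(4*p*K)) / 2 with he₀def
  have he₀pos : 0 < e₀ := by rw [he₀def]; positivity
  set C₅ : ℝ := 2 / e₀ with hC₅def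
  have hC₅pos : 0 < C₅ := by rw [hC₅def]; positivity
  set T : ℕ → ℝ := fun i => K / (2*(i:ℝ)+1) with hTdef
  have hTpos : ∀ i : ℕ, 0 < T i := by
    intro i
    rw [hTdef]
    positivity
  have hTanti : ∀ i j : ℕ, i ≤ j → T j ≤ T i := by
    intro i j hij
    rw [hTdef]
    simp only
    rw [div_le_div_iff₀ (by positivity) (by positivity)]
    have hcast : (i:ℝ) ≤ (j:ℝ) := Nat.cast_le.mpr hij
    nlinarith [hKpos]
  -- key doubling estimate at scale T n
  have key : ∀ n : ℕ, T n ≤ 1/8 → wHat ω' (1 - 4*T n) ≤ C₅ * wHat ω' (1 - T n) := by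
    intro n htn
    have ht0 := hTpos n
    have hncast : (0:ℝ) ≤ (n:ℝ) := Nat.cast_nonneg n
    have hx1 : (1:ℝ) ≤ 2*(n:ℝ)+1 := by linarith
    have h2n : (0:ℝ) < 2*(n:ℝ)+1 := by linarith
    have hu : (0:ℝ) < 1/(2*(n:ℝ)+1) := by positivity
    have hu1 : 1/(2*(n:ℝ)+1) ≤ 1 := by
      rw [div_le_one h2n]; linarith
    have hmomA := hA (2*(n:ℝ)+1) hx1
    have harg : k^m * (1/(2*(n:ℝ)+1)) = T n := by
      rw [hTdef, hKdef]
      ring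
    have hiterC := iterC hk hC₂ hDcμ m (1/(2*(n:ℝ)+1)) hu (by rw [harg]; linarith)
    rw [harg] at hiterC
    have hμhat_nn : 0 ≤ wHat μ (1 - 1/(2*(n:ℝ)+1)) :=
      hat_nonneg hμ_int hμ_nn (by linarith) (by linarith)
    have hmono_chain : A * wMom μ (2*(n:ℝ)+1) ≤ wHat μ (1 - T n) := by
      calc A * wMom μ (2*(n:ℝ)+1)
          ≤ A * (C₄ * wHat μ (1 - 1/(2*(n:ℝ)+1))) :=
            mul_le_mul_of_nonneg_left hmomA hApos.le
        _ = (A*C₄) * wHat μ (1 - 1/(2*(n:ℝ)+1)) := by ring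
        _ ≤ C₂^m * wHat μ (1 - 1/(2*(n:ℝ)+1)) :=
            mul_le_mul_of_nonneg_right hm.le hμhat_nn
        _ ≤ wHat μ (1 - T n) := hiterC
    have hmompos : 0 < wMom μ (2*(n:ℝ)+1) :=
      mom_pos hμ_int hμ_nn hμ_pos (by linarith)
    have hCB : 2 * (C * wMom μ (2*(n:ℝ)+1) ^ p) ≤ wHat μ (1 - T n) ^ p := by
      have h1 : (A * wMom μ (2*(n:ℝ)+1)) ^ p ≤ wHat μ (1 - T n) ^ p :=
        Real.rpow_le_rpow (mul_nonneg hApos.le hmompos.le) hmono_chain hp.le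
      have h2 : (A * wMom μ (2*(n:ℝ)+1)) ^ p = A^p * wMom μ (2*(n:ℝ)+1) ^ p :=
        Real.mul_rpow hApos.le hmompos.le
      rw [h2, hAp] at h1
      have h3 : 2 * (C * wMom μ (2*(n:ℝ)+1) ^ p) = 2*C * wMom μ (2*(n:ℝ)+1) ^ p := by ring
      rw [h3]
      exact h1
    have hc : 0 < C * wMom μ (2*(n:ℝ)+1) ^ p :=
      mul_pos hC (Real.rpow_pos_of_pos hmompos p)
    have hks := key_step hω'_meas hω'_nn hω'_int hμ_int hμ_nn hp hc
      (mul_nonneg hncast hp.le) ht0 htn (hLP' n) hCB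
    have hconst : e₀ ≤ (1 - 4*T n) ^ ((n:ℝ)*p) * (1 - 4*T n) := by
      have h1 : Real.exp (-(8*T n*((n:ℝ)*p))) ≤ (1 - 4*T n) ^ ((n:ℝ)*p) :=
        expE ht0 htn (mul_nonneg hncast hp.le)
      have hqK : T n * (2*(n:ℝ)+1) = K := by
        rw [hTdef]
        field_simp
      have h2 : Real.exp (-(4*p*K)) ≤ Real.exp (-(8*T n*((n:ℝ)*p))) := by
        apply Real.exp_le_exp.mpr
        have h2a : 8 * T n * ((n:ℝ)*p) ≤ 4*p*K := by
          rw [← hqK]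
          nlinarith [mul_nonneg hp.le ht0.le]
        linarith
      have h3 : (1/2:ℝ) ≤ 1 - 4*T n := by linarith
      have h4 : 0 ≤ (1 - 4*T n) ^ ((n:ℝ)*p) := Real.rpow_nonneg (by linarith) _
      calc e₀ = Real.exp (-(4*p*K)) * (1/2) := by rw [he₀def]; ring
        _ ≤ (1 - 4*T n) ^ ((n:ℝ)*p) * (1 - 4*T n) :=
            mul_le_mul (le_trans h2 h1) h3 (by norm_num) h4
    have hω'hat4_nn : 0 ≤ wHat ω' (1 - 4*T n) :=
      hat_nonneg hω'_int hω'_nn' (by linarith) (by linarith)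
    have h5 : e₀ * wHat ω' (1 - 4*T n) ≤ 2 * wHat ω' (1 - T n) := by
      calc e₀ * wHat ω' (1 - 4*T n)
          ≤ ((1 - 4*T n) ^ ((n:ℝ)*p) * (1 - 4*T n)) * wHat ω' (1 - 4*T n) :=
            mul_le_mul_of_nonneg_right hconst hω'hat4_nn
        _ ≤ 2 * wHat ω' (1 - T n) := hks
    have h6 : wHat ω' (1 - 4*T n) ≤ (2 * wHat ω' (1 - T n)) / e₀ := by
      rw [le_div_iff₀ he₀pos]
      calc wHat ω' (1 - 4*T n) * e₀ = e₀ * wHat ω' (1 - 4*T n) := mul_comm _ _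
        _ ≤ 2 * wHat ω' (1 - T n) := h5
    calc wHat ω' (1 - 4*T n) ≤ (2 * wHat ω' (1 - T n)) / e₀ := h6
      _ = C₅ * wHat ω' (1 - T n) := by rw [hC₅def]; ring
  -- stitching
  obtain ⟨n₁, hn₁⟩ := exists_nat_ge (8*K + 2)
  have hn₁2 : (2:ℝ) ≤ (n₁:ℝ) := by linarith
  have hTn₁ : T n₁ ≤ 1/8 := by
    rw [hTdef]
    simp only
    rw [div_le_iff₀ (by positivity)]
    linarith
  have hTn₁pos := hTpos n₁
  set r₀ : ℝ := 1 - 2 * T n₁ with hr₀def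
  have hhatmid₀pos : 0 < wHat ω (1 - T n₁) := hω_pos _ ⟨by linarith, by linarith⟩
  set B : ℝ := wHat ω 0 / wHat ω (1 - T n₁) with hBdef
  have hB_pos : 0 < B := div_pos (hω_pos 0 ⟨le_rfl, one_pos⟩) hhatmid₀pos
  refine ⟨C₅ + B + 2, by linarith, fun r hr => ?_⟩
  have hr0 : 0 ≤ r := hr.1
  have hr1 : r < 1 := hr.2
  have hmid_le : (1+r)/2 ≤ 1 := by linarith
  have hmid_ge : 0 ≤ (1+r)/2 := by linarith
  have hhat_mid_nn : 0 ≤ wHat ω ((1+r)/2) := hat_nonneg hω_int hω_nn hmid_ge hmid_le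
  by_cases hcase : r ≤ r₀
  · have h1 : wHat ω r ≤ wHat ω 0 := hat_anti hω_int hω_nn le_rfl hr0 hr1.le
    have h2 : wHat ω 0 = B * wHat ω (1 - T n₁) := by
      rw [hBdef]
      field_simp
    have h3 : wHat ω (1 - T n₁) ≤ wHat ω ((1+r)/2) := by
      refine hat_anti hω_int hω_nn hmid_ge ?_ (by linarith)
      rw [hr₀def] at hcase
      linarith
    have h4 : wHat ω r ≤ B * wHat ω ((1+r)/2) := by
      rw [h2] at h1
      calc wHat ω r ≤ B * wHat ω (1 - T n₁) := h1
        _ ≤ B * wHat ω ((1+r)/2) := mul_le_mul_of_nonneg_left h3 hB_pos.le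
    calc wHat ω r ≤ B * wHat ω ((1+r)/2) := h4
      _ ≤ (C₅ + B + 2) * wHat ω ((1+r)/2) :=
          mul_le_mul_of_nonneg_right (by linarith) hhat_mid_nn
  · push_neg at hcase
    set gℓ : ℝ := (1-r)/2 with hgℓdef
    have hg0 : 0 < gℓ := by rw [hgℓdef]; linarith
    have hgn₁ : gℓ < T n₁ := by
      rw [hgℓdef]
      rw [hr₀def] at hcase
      linarith
    have hex : ∃ f : ℕ, T (n₁ + f) ≤ gℓ := by
      obtain ⟨i, hi⟩ := exists_nat_ge (K / gℓ)
      refine ⟨i, ?_⟩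
      rw [hTdef]
      simp only
      rw [div_le_iff₀ (by positivity)]
      have h1 : K ≤ gℓ * i := by
        rw [div_le_iff₀ hg0] at hi
        linarith
      have h2 : ((n₁ + i : ℕ):ℝ) = (n₁:ℝ) + (i:ℝ) := by push_cast; ring
      rw [h2]
      nlinarith [(Nat.cast_nonneg n₁ : (0:ℝ) ≤ (n₁:ℝ)), (Nat.cast_nonneg i : (0:ℝ) ≤ (i:ℝ)), hg0.le]
    set f := Nat.find hex with hfdef
    have hTf : T (n₁ + f) ≤ gℓ := Nat.find_spec hex
    have hfne : f ≠ 0 := by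
      intro h0
      rw [hfdef] at h0
      have := hTf
      rw [hfdef, h0, Nat.add_zero] at this
      linarith
    obtain ⟨f', hf'⟩ : ∃ f', f = f' + 1 :=
      ⟨f - 1, (Nat.succ_pred_eq_of_pos (Nat.pos_of_ne_zero hfne)).symm⟩
    have hprev : gℓ < T (n₁ + f') := by
      have hmin := Nat.find_min hex (show f' < f by omega)
      exact lt_of_not_ge hmin
    have hhalf : T (n₁ + f') ≤ 2 * T (n₁ + f) := by
      rw [hf', hTdef]
      simp only
      have hcast : ((n₁ + (f'+1) : ℕ):ℝ) = (n₁:ℝ) + (f':ℝ) + 1 := by push_cast; ring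
      have hcast2 : ((n₁ + f' : ℕ):ℝ) = (n₁:ℝ) + (f':ℝ) := by push_cast; ring
      rw [hcast, hcast2]
      rw [show (2:ℝ) * (K / (2*((n₁:ℝ)+(f':ℝ)+1)+1)) = (2*K) / (2*((n₁:ℝ)+(f':ℝ)+1)+1) by
        ring]
      rw [div_le_div_iff₀ (by positivity) (by positivity)]
      have hf'0 : (0:ℝ) ≤ (f':ℝ) := Nat.cast_nonneg f'
      nlinarith [hKpos]
    have hTj8 : T (n₁+f) ≤ 1/8 := le_trans (hTanti n₁ (n₁+f) (Nat.le_add_right _ _)) hTn₁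
    have hkey := key (n₁+f) hTj8
    have htj0 := hTpos (n₁+f)
    have e1 : wHat ω' (1 - 4*T (n₁+f)) = wHat ω (1 - 4*T (n₁+f)) :=
      hhat_eq _ (by linarith) (by linarith)
    have e2 : wHat ω' (1 - T (n₁+f)) = wHat ω (1 - T (n₁+f)) :=
      hhat_eq _ (by linarith) (by linarith)
    rw [e1, e2] at hkey
    have hstep1 : wHat ω r ≤ wHat ω (1 - 4*T (n₁+f)) := by
      refine hat_anti hω_int hω_nn (by linarith) ?_ hr1.le
      have h2Tj : gℓ < 2 * T (n₁+f) := lt_of_lt_of_le hprev hhalf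
      rw [hgℓdef] at h2Tj
      linarith
    have hstep3 : wHat ω (1 - T (n₁+f)) ≤ wHat ω ((1+r)/2) := by
      refine hat_anti hω_int hω_nn hmid_ge ?_ (by linarith)
      rw [hgℓdef] at hTf
      linarith
    calc wHat ω r ≤ wHat ω (1 - 4*T (n₁+f)) := hstep1
      _ ≤ C₅ * wHat ω (1 - T (n₁+f)) := hkey
      _ ≤ C₅ * wHat ω ((1+r)/2) := mul_le_mul_of_nonneg_left hstep3 hC₅pos.le
      _ ≤ (C₅ + B + 2) * wHat ω ((1+r)/2) :=
          mul_le_mul_of_nonneg_right (by linarith) hhat_mid_nn
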